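/- If two unit vectors p₀ and p_{n−1} in ℝ³ are the endpoints of an orthogonal path p₀,…,p_{n−1} (n ≥ 2) on the unit sphere, then their geodesic separation is a multiple of π/2; that is, either p_{n−1} = −p₀ (they are antipodal) or ⟪p₀, p_{n−1}⟫ = 0 (they form a quarter pair). -/
import Mathlib


open scoped RealInnerProductSpace

/-- In `ℝ³`, the orthogonal complement of the span of two orthonormal vectors is
one-dimensional, so two unit vectors `w`, `z` orthogonal to both `u` and `v`
satisfy `z = ±w`. -/
lemma aux_one_dim_perp (u v w z : EuclideanSpace ℝ (Fin 3))
    (hu : ‖u‖ = 1) (hv : ‖v‖ = 1) (hw : ‖w‖ = 1) (hz : ‖z‖ = 1)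
    (huv : ⟪u, v⟫ = 0) (huw : ⟪u, w⟫ = 0) (hvw : ⟪v, w⟫ = 0)
    (huz : ⟪u, z⟫ = 0) (hvz : ⟪v, z⟫ = 0) : z = w ∨ z = -w := by
  have hON : Orthonormal ℝ ![u, v] := by
    constructor
    · intro i; fin_cases i <;> simpa
    · intro i j hij
      fin_cases i <;> fin_cases j <;>
        simp only [Matrix.cons_val_zero, Matrix.cons_val_one, Matrix.head_cons] <;>
        first
          | exact absurd rfl hij
          | exact huv
          | exact real_inner_comm u v ▸ huv
  set K : Submodule ℝ (EuclideanSpace ℝ (Fin 3)) :=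
    Submodule.span ℝ (Set.range ![u, v]) with hK
  have hK2 : Module.finrank ℝ K = 2 := by
    rw [hK, finrank_span_eq_card hON.linearIndependent]; simp
  have hKperp : Module.finrank ℝ Kᗮ = 1 := by
    have := Submodule.finrank_add_finrank_orthogonal K
    rw [hK2, finrank_euclideanSpace_fin] at this
    omega
  have hmem : ∀ x : EuclideanSpace ℝ (Fin 3), ⟪u, x⟫ = 0 → ⟪v, x⟫ = 0 → x ∈ Kᗮ := by
    intro x hux hvx
    rw [Submodule.mem_orthogonal]
    intro y hy
    induction hy using Submodule.span_induction with
    | mem y hy => obtain ⟨i, rfl⟩ := hy; fin_cases i <;> simpa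
    | zero => simp
    | add a b _ _ ha hb => rw [inner_add_left, ha, hb]; ring
    | smul c a _ ha => rw [real_inner_smul_left, ha]; ring
  have hwK : w ∈ Kᗮ := hmem w huw hvw
  have hzK : z ∈ Kᗮ := hmem z huz hvz
  have hwne : w ≠ 0 := by intro h; rw [h, norm_zero] at hw; norm_num at hw
  have hspan : Submodule.span ℝ {w} = Kᗮ := by
    apply Submodule.eq_of_le_of_finrank_eq
    · rw [Submodule.span_le, Set.singleton_subset_iff]; exact hwK
    · rw [finrank_span_singleton hwne, hKperp]
  have hzw : z ∈ Submodule.span ℝ ({w} : Set (EuclideanSpace ℝ (Fin 3))) := by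
    rw [hspan]; exact hzK
  obtain ⟨c, rfl⟩ := Submodule.mem_span_singleton.mp hzw
  have hc : |c| = 1 := by
    have := hz
    rw [norm_smul, hw, mul_one, Real.norm_eq_abs] at this
    exact this
  rcases abs_eq (by norm_num : (0:ℝ) ≤ 1) |>.mp hc with h | h
  · left; rw [h, one_smul]
  · right; rw [h, neg_smul, one_smul]

/-- Two unit vectors with inner product `-1` are negatives of each other. -/
lemma aux_inner_neg_one {x y : EuclideanSpace ℝ (Fin 3)} (hx : ‖x‖ = 1) (hy : ‖y‖ = 1)
    (h : ⟪x, y⟫ = -1) : y = -x := by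
  have h' : ⟪x, -y⟫ = 1 := by rw [inner_neg_right, h]; ring
  have := (inner_eq_one_iff_of_norm_eq_one hx (by rwa [norm_neg])).mp h'
  rw [this, neg_neg]

/-- If two unit vectors `p 0` and `p (n-1)` are the endpoints of an orthogonal path
`p 0, …, p (n-1)` on the unit sphere (an injective sequence of unit vectors with
consecutive points orthogonal and all interior angles rectilinear), then their
geodesic separation is a multiple of `π/2`: either they are antipodal,
`p (n-1) = -p 0`, or they form a quarter pair, `⟪p 0, p (n-1)⟫ = 0`. -/
theorem orthogonal_path_endpoints_antipodal_or_quarter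
    (n : ℕ) (hn : 2 ≤ n) (p : ℕ → EuclideanSpace ℝ (Fin 3))
    (hunit : ∀ i < n, ‖p i‖ = 1)
    (hinj : ∀ i < n, ∀ j < n, p i = p j → i = j)
    (horth : ∀ i, i + 1 < n → ⟪p i, p (i + 1)⟫ = 0)
    (hrect : ∀ i, 0 < i → i + 1 < n →
      ⟪p (i - 1), p (i + 1)⟫ ∈ ({-1, 0, 1} : Set ℝ)) :
    p (n - 1) = -p 0 ∨ ⟪p 0, p (n - 1)⟫ = 0 := by
  have Q : ∀ i, i < n → (p i = p 0 ∨ p i = -p 0 ∨ ⟪p 0, p i⟫ = 0) := by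
    intro i
    induction i using Nat.strong_induction_on with
    | _ i ih =>
      match i with
      | 0 => intro _; left; rfl
      | 1 => intro h1; right; right; exact horth 0 h1
      | (k + 2) =>
        intro hk2
        have hkn : k < n := by omega
        have hk1n : k + 1 < n := by omega
        have hQk := ih k (by omega) hkn
        have hQk1 := ih (k + 1) (by omega) hk1n
        have hr := hrect (k + 1) (by omega) hk2
        simp only [Nat.add_sub_cancel] at hr
        rcases hr with hr | hr | hr
        · -- ⟪p k, p (k+2)⟫ = -1 : p (k+2) = -p k
          have hpk2 : p (k + 2) = -p k :=
            aux_inner_neg_one (hunit k hkn) (hunit (k + 2) hk2) hr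
          rcases hQk with h | h | h
          · right; left; rw [hpk2, h]
          · left; rw [hpk2, h, neg_neg]
          · right; right; rw [hpk2, inner_neg_right, h, neg_zero]
        · -- ⟪p k, p (k+2)⟫ = 0
          rcases hQk with h | h | h
          · right; right; rw [← h]; exact hr
          · right; right
            have : ⟪-p 0, p (k + 2)⟫ = 0 := by rw [← h]; exact hr
            rw [inner_neg_left] at this; linarith
          rcases hQk1 with h1 | h1 | h1
          · right; right; rw [← h1]; exact horth (k + 1) hk2
          · right; right
            have : ⟪-p 0, p (k + 2)⟫ = 0 := by
              rw [← h1]; exact horth (k + 1) hk2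
            rw [inner_neg_left] at this; linarith
          · -- p 0 and p (k+2) both orthogonal to p k, p (k+1)
            have key := aux_one_dim_perp (p k) (p (k + 1)) (p (k + 2)) (p 0)
              (hunit k hkn) (hunit (k + 1) hk1n) (hunit (k + 2) hk2)
              (hunit 0 (by omega))
              (horth k hk1n) hr (horth (k + 1) hk2)
              (real_inner_comm (p 0) (p k) ▸ h)
              (real_inner_comm (p 0) (p (k + 1)) ▸ h1)
            rcases key with hkey | hkey
            · left; exact hkey.symm
            · right; left
              rw [eq_neg_iff_add_eq_zero] at hkey ⊢
              rw [add_comm]; exact hkey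
        · -- ⟪p k, p (k+2)⟫ = 1 : contradiction with injectivity
          exfalso
          have heq : p k = p (k + 2) :=
            (inner_eq_one_iff_of_norm_eq_one (hunit k hkn) (hunit (k + 2) hk2)).mp hr
          have := hinj k hkn (k + 2) hk2 heq
          omega
  have hQ := Q (n - 1) (by omega)
  rcases hQ with h | h | h
  · exfalso
    have := hinj (n - 1) (by omega) 0 (by omega) h
    omega
  · left; exact h
  · right; exact h
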